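/- Let λ = -1 and A = -id + E on ℓ². Then the system ẏ = Ay is globally asymptotically stable: for every y₀ ∈ ℓ², ‖e^{tA} y₀‖₂ = e^{-t}‖e^{tE} y₀‖₂ → 0 as t → +∞. -/

import Mathlib

open scoped ENNReal
open MeasureTheory Filter
open scoped Nat
set_option synthInstance.maxHeartbeats 1000000
set_option maxHeartbeats 1000000

noncomputable section

/-- The real Hilbert space `ℓ²` of square-summable real sequences. -/
abbrev ell2 : Type := lp (fun _ : ℕ => ℝ) 2

lemma shift_memℓp (y : ell2) : Memℓp (fun n => y (n + 1)) 2 := by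
  have h : Summable fun n : ℕ => ‖y n‖ ^ (2 : ℝ≥0∞).toReal :=
    (memℓp_gen_iff (by norm_num)).mp (lp.memℓp y)
  exact memℓp_gen (h.comp_injective (add_left_injective 1))

/-- The left shift operator `E : ℓ² → ℓ²`, `(Ey)ₙ = yₙ₊₁`. -/
def shiftE : ell2 →L[ℝ] ell2 :=
  LinearMap.mkContinuous
    { toFun := fun y => ⟨fun n => y (n + 1), shift_memℓp y⟩
      map_add' := fun y z => by
        ext n
        simp [lp.coeFn_add]; rfl
      map_smul' := fun c y => by
        ext n
        simp [lp.coeFn_smul] }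
    1
    (fun y => by
      rw [one_mul]
      have h2 : (0:ℝ) < (2 : ℝ≥0∞).toReal := by norm_num
      have hy := lp.norm_rpow_eq_tsum h2 y
      have hEy := lp.norm_rpow_eq_tsum h2 (⟨fun n => y (n + 1), shift_memℓp y⟩ : ell2)
      have hle : (∑' n : ℕ, ‖y (n + 1)‖ ^ (2 : ℝ≥0∞).toReal)
          ≤ ∑' n : ℕ, ‖y n‖ ^ (2 : ℝ≥0∞).toReal := by
        have hs : Summable fun n : ℕ => ‖y n‖ ^ (2 : ℝ≥0∞).toReal :=
          (memℓp_gen_iff h2).mp (lp.memℓp y)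
        exact tsum_comp_le_tsum_of_inj hs (fun n => by positivity)
          (add_left_injective 1)
      have key : ‖(⟨fun n => y (n + 1), shift_memℓp y⟩ : ell2)‖ ^ (2 : ℝ≥0∞).toReal
          ≤ ‖y‖ ^ (2 : ℝ≥0∞).toReal := by
        rw [hy, hEy]; exact hle
      exact (Real.rpow_le_rpow_iff
        (norm_nonneg ((⟨fun n => y (n + 1), shift_memℓp y⟩ : ell2))) (norm_nonneg y) h2).mp key)

/-- The operator `A = λ·id + E` on `ℓ²`. -/
def opA (lam : ℝ) : ell2 →L[ℝ] ell2 :=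
  lam • ContinuousLinearMap.id ℝ ell2 + shiftE

-- auxiliary lemmas

lemma shiftE_apply (y : ell2) (n : ℕ) : shiftE y n = y (n + 1) := rfl

lemma norm_shiftE_le : ‖shiftE‖ ≤ 1 :=
  LinearMap.mkContinuous_norm_le _ zero_le_one _

lemma exp_apply_tsum (T : ell2 →L[ℝ] ell2) (v : ell2) :
    NormedSpace.exp T v = ∑' (n : ℕ), ((n ! : ℝ))⁻¹ • (T ^ n) v := by
  have hs : HasSum (fun n : ℕ => ((n ! : ℝ))⁻¹ • T ^ n) (NormedSpace.exp T) := by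
    rw [NormedSpace.exp_eq_tsum ℝ]
    exact (NormedSpace.expSeries_summable' (𝕂 := ℝ) T).hasSum
  have h2 := hs.mapL (ContinuousLinearMap.apply ℝ ell2 v)
  simp only [ContinuousLinearMap.apply_apply, ContinuousLinearMap.smul_apply] at h2
  exact h2.tsum_eq.symm

lemma norm_pow_shiftE_apply_le (n : ℕ) (v : ell2) : ‖(shiftE ^ n) v‖ ≤ ‖v‖ := by
  induction n with
  | zero => simp
  | succ n ih =>
    rw [pow_succ', ContinuousLinearMap.mul_apply]
    calc ‖shiftE ((shiftE ^ n) v)‖ ≤ ‖shiftE‖ * ‖(shiftE ^ n) v‖ :=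
          shiftE.le_opNorm _
      _ ≤ 1 * ‖v‖ := by
          apply mul_le_mul norm_shiftE_le ih (norm_nonneg _) zero_le_one
      _ = ‖v‖ := one_mul _

lemma norm_exp_shiftE_le {t : ℝ} (ht : 0 ≤ t) (v : ell2) :
    ‖NormedSpace.exp (t • shiftE) v‖ ≤ Real.exp t * ‖v‖ := by
  rw [exp_apply_tsum]
  have hbd : ∀ n : ℕ, ‖((n ! : ℝ))⁻¹ • ((t • shiftE) ^ n) v‖ ≤ t ^ n / n ! * ‖v‖ := by
    intro n
    rw [smul_pow, norm_smul, ContinuousLinearMap.smul_apply, norm_smul]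
    rw [Real.norm_eq_abs, Real.norm_eq_abs, abs_of_nonneg (pow_nonneg ht n),
      abs_of_nonneg (by positivity : (0:ℝ) ≤ (n ! : ℝ)⁻¹)]
    calc (n ! : ℝ)⁻¹ * (t ^ n * ‖(shiftE ^ n) v‖)
        ≤ (n ! : ℝ)⁻¹ * (t ^ n * ‖v‖) := by
          gcongr
          exact norm_pow_shiftE_apply_le n v
      _ = t ^ n / n ! * ‖v‖ := by ring
  have hsum : Summable fun n : ℕ => t ^ n / n ! * ‖v‖ :=
    (Real.summable_pow_div_factorial t).mul_right _
  calc ‖∑' (n : ℕ), ((n ! : ℝ))⁻¹ • ((t • shiftE) ^ n) v‖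
      ≤ ∑' (n : ℕ), ‖((n ! : ℝ))⁻¹ • ((t • shiftE) ^ n) v‖ := by
        apply norm_tsum_le_tsum_norm
        exact Summable.of_nonneg_of_le (fun n => norm_nonneg _) hbd hsum
    _ ≤ ∑' (n : ℕ), t ^ n / n ! * ‖v‖ := by
        apply Summable.tsum_le_tsum hbd _ hsum
        exact Summable.of_nonneg_of_le (fun n => norm_nonneg _) hbd hsum
    _ = (∑' (n : ℕ), t ^ n / n !) * ‖v‖ := tsum_mul_right
    _ = Real.exp t * ‖v‖ := by
        congr 1
        rw [Real.exp_eq_exp_ℝ, NormedSpace.exp_eq_tsum_div]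

lemma exp_opA_eq (t : ℝ) :
    NormedSpace.exp (t • opA (-1)) =
      Real.exp (-t) • NormedSpace.exp (t • shiftE) := by
  have h1 : t • opA (-1) = algebraMap ℝ (ell2 →L[ℝ] ell2) (-t) + t • shiftE := by
    simp only [opA, smul_add, smul_smul, Algebra.algebraMap_eq_smul_one,
      ContinuousLinearMap.one_def]
    norm_num
  have hc : Commute (algebraMap ℝ (ell2 →L[ℝ] ell2) (-t)) (t • shiftE) :=
    Algebra.commutes (-t) (t • shiftE)
  rw [h1, NormedSpace.exp_add_of_commute_of_mem_ball (𝕂 := ℝ) hc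
    ((NormedSpace.expSeries_radius_eq_top ℝ (ell2 →L[ℝ] ell2)).symm ▸ edist_lt_top _ _)
    ((NormedSpace.expSeries_radius_eq_top ℝ (ell2 →L[ℝ] ell2)).symm ▸ edist_lt_top _ _), ← NormedSpace.algebraMap_exp_comm,
    ← Real.exp_eq_exp_ℝ]
  exact (Algebra.smul_def _ _).symm

lemma exp_opA_norm_le {t : ℝ} (ht : 0 ≤ t) (v : ell2) :
    ‖NormedSpace.exp (t • opA (-1)) v‖ ≤ ‖v‖ := by
  rw [exp_opA_eq, ContinuousLinearMap.smul_apply, norm_smul, Real.norm_eq_abs,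
    abs_of_pos (Real.exp_pos _)]
  calc Real.exp (-t) * ‖NormedSpace.exp (t • shiftE) v‖
      ≤ Real.exp (-t) * (Real.exp t * ‖v‖) := by
        gcongr
        exact norm_exp_shiftE_le ht v
    _ = ‖v‖ := by
        rw [← mul_assoc, ← Real.exp_add]
        simp

lemma shiftE_single_zero (x : ℝ) : shiftE (lp.single 2 0 x) = 0 := by
  ext n
  rw [shiftE_apply]
  simp [lp.single_apply]

lemma shiftE_single_succ (m : ℕ) (x : ℝ) :
    shiftE (lp.single 2 (m + 1) x) = lp.single 2 m x := by
  ext n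
  rw [shiftE_apply]
  by_cases h : n = m
  · subst h
    rw [lp.single_apply_self, lp.single_apply_self]
  · rw [lp.single_apply, lp.single_apply, Pi.single_apply, Pi.single_apply, if_neg (by omega : ¬ n + 1 = m + 1), if_neg h]

lemma pow_shiftE_single (m : ℕ) (x : ℝ) :
    (shiftE ^ (m + 1)) (lp.single 2 m x) = 0 := by
  induction m with
  | zero => rw [pow_one]; exact shiftE_single_zero x
  | succ m ih =>
    rw [pow_succ, ContinuousLinearMap.mul_apply, shiftE_single_succ, ih]

lemma pow_shiftE_single' {m k : ℕ} (hk : m < k) (x : ℝ) :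
    (shiftE ^ k) (lp.single 2 m x) = 0 := by
  obtain ⟨j, rfl⟩ : ∃ j, k = j + (m + 1) := ⟨k - (m + 1), by omega⟩
  rw [pow_add, ContinuousLinearMap.mul_apply, pow_shiftE_single, map_zero]

lemma tendsto_exp_opA_single (m : ℕ) (x : ℝ) :
    Tendsto (fun t : ℝ => NormedSpace.exp (t • opA (-1)) (lp.single 2 m x))
      atTop (nhds 0) := by
  have key : ∀ t : ℝ, NormedSpace.exp (t • opA (-1)) (lp.single 2 m x) =
      ∑ n ∈ Finset.range (m + 1),
        (Real.exp (-t) * ((n ! : ℝ)⁻¹ * t ^ n)) • (shiftE ^ n) (lp.single 2 m x) := by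
    intro t
    rw [exp_opA_eq, ContinuousLinearMap.smul_apply, exp_apply_tsum,
      tsum_eq_sum (s := Finset.range (m + 1)) ?_, Finset.smul_sum]
    · apply Finset.sum_congr rfl
      intro n _
      rw [smul_pow, ContinuousLinearMap.smul_apply, smul_smul, smul_smul, mul_assoc]
    · intro n hn
      rw [smul_pow, ContinuousLinearMap.smul_apply,
        pow_shiftE_single' (by simpa using hn) x, smul_zero, smul_zero]
  simp only [key]
  have h0 : (0 : ell2) = ∑ n ∈ Finset.range (m + 1), (0 : ell2) := by simp
  rw [h0]
  apply tendsto_finset_sum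
  intro n _
  have hc : Tendsto (fun t : ℝ => Real.exp (-t) * ((n ! : ℝ)⁻¹ * t ^ n)) atTop
      (nhds 0) := by
    have h1 := (Real.tendsto_pow_mul_exp_neg_atTop_nhds_zero n).const_mul ((n ! : ℝ)⁻¹)
    rw [mul_zero] at h1
    convert h1 using 2 with t
    ring
  have := hc.smul_const ((shiftE ^ n) (lp.single 2 m x))
  rwa [zero_smul] at this

/-- For `λ = -1`, `A = -id + E`, the system `ẏ = Ay` is globally asymptotically stable:
for every `y₀ ∈ ℓ²`, `‖e^{tA} y₀‖₂ = e^{-t} ‖e^{tE} y₀‖₂ → 0` as `t → +∞`. -/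
theorem stmt4 (y0 : ell2) :
    (∀ t : ℝ, ‖NormedSpace.exp (t • opA (-1)) y0‖ =
      Real.exp (-t) * ‖NormedSpace.exp (t • shiftE) y0‖) ∧
    Tendsto (fun t : ℝ => NormedSpace.exp (t • opA (-1)) y0) atTop (nhds 0) := by
  constructor
  · intro t
    rw [exp_opA_eq, ContinuousLinearMap.smul_apply, norm_smul, Real.norm_eq_abs,
      abs_of_pos (Real.exp_pos _)]
  · rw [NormedAddCommGroup.tendsto_nhds_zero]
    intro ε hε
    have hsum : HasSum (fun i : ℕ => lp.single 2 i (y0 i)) y0 :=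
      lp.hasSum_single (by norm_num) y0
    have h1 := Metric.tendsto_nhds.mp hsum (ε / 2) (by positivity)
    obtain ⟨s, hs⟩ := h1.exists
    set g : ell2 := ∑ i ∈ s, lp.single 2 i (y0 i) with hg
    have hgd : ‖y0 - g‖ < ε / 2 := by
      rw [← dist_eq_norm, dist_comm]
      exact hs
    have hgt : Tendsto (fun t : ℝ => NormedSpace.exp (t • opA (-1)) g) atTop
        (nhds 0) := by
      have heq : ∀ t : ℝ, NormedSpace.exp (t • opA (-1)) g =
          ∑ i ∈ s, NormedSpace.exp (t • opA (-1)) (lp.single 2 i (y0 i)) := fun t =>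
        map_sum _ _ _
      simp only [heq]
      have h0 : (0 : ell2) = ∑ i ∈ s, (0 : ell2) := by simp
      rw [h0]
      exact tendsto_finset_sum _ fun i _ => tendsto_exp_opA_single i (y0 i)
    have h2 : ∀ᶠ t : ℝ in atTop, ‖NormedSpace.exp (t • opA (-1)) g‖ < ε / 2 :=
      (NormedAddCommGroup.tendsto_nhds_zero.mp hgt) (ε / 2) (by positivity)
    filter_upwards [h2, eventually_ge_atTop (0 : ℝ)] with t h2t ht
    have hsplit : NormedSpace.exp (t • opA (-1)) y0 =
        NormedSpace.exp (t • opA (-1)) (y0 - g) +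
          NormedSpace.exp (t • opA (-1)) g := by
      rw [← map_add, sub_add_cancel]
    rw [hsplit]
    have hn := norm_add_le (NormedSpace.exp (t • opA (-1)) (y0 - g))
      (NormedSpace.exp (t • opA (-1)) g)
    have hb := exp_opA_norm_le ht (y0 - g)
    linarith

end
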